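/- For every positive integer n with n ≡ 0 (mod 8), t(1,1,6;n) = 2·N(1,1,3;n+1), and for every positive integer n with n ≡ 4 (mod 8), t(1,1,6;n) = N(1,1,3;n+1). -/

import Mathlib

def tri (x : ℤ) : ℤ := x * (x + 1) / 2

noncomputable def N (a b c n : ℕ) : ℕ :=
  Nat.card {p : ℤ × ℤ × ℤ // (n : ℤ) = a * p.1 ^ 2 + b * p.2.1 ^ 2 + c * p.2.2 ^ 2}

noncomputable def t (a b c n : ℕ) : ℕ :=
  Nat.card {p : ℤ × ℤ × ℤ // (n : ℤ) = a * tri p.1 + b * tri p.2.1 + c * tri p.2.2}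

noncomputable def T (a b c n : ℕ) : ℕ :=
  Nat.card {p : ℕ × ℕ × ℕ // (n : ℤ) = a * tri p.1 + b * tri p.2.1 + c * tri p.2.2}

/-! ### Auxiliary machinery -/

lemma tri2 (x : ℤ) : 2 * tri x = x * (x + 1) := by
  have h : (2:ℤ) ∣ x * (x + 1) := (Int.even_mul_succ_self x).two_dvd
  exact Int.mul_ediv_cancel' h

/-- generic split of a subtype along a decidable predicate -/
def splitEquiv {α : Type*} (P Q : α → Prop) [DecidablePred Q] :
    {a // P a} ≃ {a // P a ∧ Q a} ⊕ {a // P a ∧ ¬ Q a} where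
  toFun s := if h : Q s.1 then .inl ⟨s.1, s.2, h⟩ else .inr ⟨s.1, s.2, h⟩
  invFun s := Sum.elim (fun t => ⟨t.1, t.2.1⟩) (fun t => ⟨t.1, t.2.1⟩) s
  left_inv s := by by_cases h : Q s.1 <;> simp [h]
  right_inv s := by rcases s with ⟨x,hx⟩|⟨x,hx⟩ <;> simp [hx.2]

lemma sqfact (x X : ℤ) (hX : X = x^2) :
    (x%4 = 0 ∧ X%8 = 0) ∨ (x%4 = 1 ∧ X%8 = 1) ∨ (x%4 = 2 ∧ X%8 = 4) ∨ (x%4 = 3 ∧ X%8 = 1) := by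
  have hx : x = 4*(x/4) + x%4 := by omega
  have h : X = 8*(2*(x/4)^2 + (x/4)*(x%4)) + (x%4)^2 := by
    rw [hX]; linear_combination (x + 4*(x/4) + x%4) * hx
  have h4 : x%4 = 0 ∨ x%4 = 1 ∨ x%4 = 2 ∨ x%4 = 3 := by omega
  obtain ⟨K, hK⟩ : ∃ K, 2*(x/4)^2 + (x/4)*(x%4) = K := ⟨_, rfl⟩
  rw [hK] at h
  rcases h4 with h4|h4|h4|h4 <;> rw [h4] at h <;> norm_num at h <;> omega

lemma mod8_1 {m x y z : ℤ} (h : m = x^2+y^2+3*z^2) (hm : m % 8 = 1) :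
    (x%2 = 1 ∧ y%2 = 0 ∧ z%2 = 0) ∨ (x%2 = 0 ∧ y%2 = 1 ∧ z%2 = 0) := by
  rcases sqfact x (x^2) rfl with ⟨h1,h2⟩|⟨h1,h2⟩|⟨h1,h2⟩|⟨h1,h2⟩ <;>
  rcases sqfact y (y^2) rfl with ⟨h3,h4⟩|⟨h3,h4⟩|⟨h3,h4⟩|⟨h3,h4⟩ <;>
  rcases sqfact z (z^2) rfl with ⟨h5,h6⟩|⟨h5,h6⟩|⟨h5,h6⟩|⟨h5,h6⟩ <;> omega

lemma mod8_5 {m x y z : ℤ} (h : m = x^2+y^2+3*z^2) (hm : m % 8 = 5) :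
    (x%2 = 1 ∧ y%2 = 1 ∧ z%2 = 1) ∨ (x%2 = 1 ∧ y%2 = 0 ∧ z%2 = 0 ∧ (y-z)%4 = 2)
      ∨ (x%2 = 0 ∧ y%2 = 1 ∧ z%2 = 0 ∧ (x-z)%4 = 2) := by
  rcases sqfact x (x^2) rfl with ⟨h1,h2⟩|⟨h1,h2⟩|⟨h1,h2⟩|⟨h1,h2⟩ <;>
  rcases sqfact y (y^2) rfl with ⟨h3,h4⟩|⟨h3,h4⟩|⟨h3,h4⟩|⟨h3,h4⟩ <;>
  rcases sqfact z (z^2) rfl with ⟨h5,h6⟩|⟨h5,h6⟩|⟨h5,h6⟩|⟨h5,h6⟩ <;> omega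

lemma quadPair {u v U V : ℤ} (h1 : 2*U = u+3*v) (h2 : 2*V = u-v) :
    U^2 + 3*V^2 = u^2 + 3*v^2 := by
  have key : 4*(U^2+3*V^2) = 4*(u^2+3*v^2) := by
    linear_combination (2*U+u+3*v)*h1 + 3*(2*V+u-v)*h2
  linarith

lemma quadPair' {u v U V : ℤ} (h1 : 2*U = u-3*v) (h2 : 2*V = u+v) :
    U^2 + 3*V^2 = u^2 + 3*v^2 := by
  have key : 4*(U^2+3*V^2) = 4*(u^2+3*v^2) := by
    linear_combination (2*U+u-3*v)*h1 + 3*(2*V+u+v)*h2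
  linarith

lemma quadPair'' {u v U V : ℤ} (h1 : 2*U = u+3*v) (h2 : 2*V = v-u) :
    U^2 + 3*V^2 = u^2 + 3*v^2 := by
  have key : 4*(U^2+3*V^2) = 4*(u^2+3*v^2) := by
    linear_combination (2*U+u+3*v)*h1 + 3*(2*V+v-u)*h2
  linarith

lemma quadQuarter {a w X Z : ℤ} (h1 : 4*X = a+3*w) (h2 : 4*Z = a-w) :
    4*(X^2 + 3*Z^2) = a^2 + 3*w^2 := by
  have key : 16*(X^2+3*Z^2) = 4*(a^2+3*w^2) := by
    linear_combination (4*X+a+3*w)*h1 + 3*(4*Z+a-w)*h2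
  linarith

lemma quadHalf {u v A B : ℤ} (h1 : 2*A = u+v) (h2 : 2*B = u-v) :
    2*(A^2 + B^2) = u^2 + v^2 := by
  have key : 4*(A^2+B^2) = 2*(u^2+v^2) := by
    linear_combination (2*A+u+v)*h1 + (2*B+u-v)*h2
  linarith

def PA (m : ℤ) (p : ℤ×ℤ×ℤ) : Prop :=
  8*m = p.1^2+p.2.1^2+6*p.2.2^2 ∧ p.1%2=1 ∧ p.2.1%2=1 ∧ p.2.2%2=1
def PM (m : ℤ) (p : ℤ×ℤ×ℤ) : Prop :=
  4*m = p.1^2+p.2.1^2+3*p.2.2^2 ∧ (p.1+p.2.1)%2=1 ∧ p.2.2%2=1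
def Sx' (m : ℤ) (p : ℤ×ℤ×ℤ) : Prop := (m = p.1^2+p.2.1^2+3*p.2.2^2) ∧ (p.1+p.2.2)%2 = 1
def Sy' (m : ℤ) (p : ℤ×ℤ×ℤ) : Prop := (m = p.1^2+p.2.1^2+3*p.2.2^2) ∧ (p.2.1+p.2.2)%2 = 1

def eqv1 (n : ℕ) :
    {p : ℤ×ℤ×ℤ // (n:ℤ) = tri p.1 + tri p.2.1 + 6*tri p.2.2} ≃ {p : ℤ×ℤ×ℤ // PA ((n:ℤ)+1) p} where
  toFun p := ⟨(2*p.1.1+1, 2*p.1.2.1+1, 2*p.1.2.2+1), by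
    obtain ⟨⟨x,y,z⟩, h⟩ := p
    dsimp only at h ⊢
    refine ⟨?_, ?_, ?_, ?_⟩ <;> dsimp only
    · linear_combination 8*h + 4*(tri2 x) + 4*(tri2 y) + 24*(tri2 z)
    · omega
    · omega
    · omega⟩
  invFun p := ⟨((p.1.1-1)/2, (p.1.2.1-1)/2, (p.1.2.2-1)/2), by
    obtain ⟨⟨u,v,w⟩, h8, hu, hv, hw⟩ := p
    dsimp only at h8 hu hv hw ⊢
    have eu : u = 2*((u-1)/2)+1 := by omega
    have ev : v = 2*((v-1)/2)+1 := by omega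
    have ew : w = 2*((w-1)/2)+1 := by omega
    have key : 8*(n:ℤ) = 8*tri ((u-1)/2) + 8*tri ((v-1)/2) + 48*tri ((w-1)/2) := by
      linear_combination h8 + (u+2*((u-1)/2)+1)*eu + (v+2*((v-1)/2)+1)*ev
        + 6*(w+2*((w-1)/2)+1)*ew - 4*(tri2 ((u-1)/2)) - 4*(tri2 ((v-1)/2)) - 24*(tri2 ((w-1)/2))
    linarith⟩
  left_inv p := by
    obtain ⟨⟨x,y,z⟩, h⟩ := p
    apply Subtype.ext
    dsimp only
    simp only [Prod.mk.injEq, and_true]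
    omega
  right_inv p := by
    obtain ⟨⟨u,v,w⟩, h8, hu, hv, hw⟩ := p
    dsimp only at h8 hu hv hw
    apply Subtype.ext
    dsimp only
    simp only [Prod.mk.injEq, and_true]
    omega

def eqv2 (m : ℤ) : {p : ℤ×ℤ×ℤ // PA m p} ≃ {p : ℤ×ℤ×ℤ // PM m p} where
  toFun p := ⟨((p.1.1+p.1.2.1)/2, (p.1.1-p.1.2.1)/2, p.1.2.2), by
    obtain ⟨⟨u,v,w⟩, h8, hu, hv, hw⟩ := p
    dsimp only at h8 hu hv hw ⊢
    have h1 : 2*((u+v)/2) = u+v := by omega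
    have h2 : 2*((u-v)/2) = u-v := by omega
    have hq := quadHalf h1 h2
    refine ⟨?_, ?_, ?_⟩ <;> dsimp only
    · linarith
    · omega
    · omega⟩
  invFun p := ⟨(p.1.1+p.1.2.1, p.1.1-p.1.2.1, p.1.2.2), by
    obtain ⟨⟨a,b,w⟩, h4, hab, hw⟩ := p
    dsimp only at h4 hab hw ⊢
    refine ⟨?_, ?_, ?_, ?_⟩ <;> dsimp only
    · linear_combination 2*h4
    · omega
    · omega
    · omega⟩
  left_inv p := by
    obtain ⟨⟨u,v,w⟩, h8, hu, hv, hw⟩ := p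
    dsimp only at h8 hu hv hw
    apply Subtype.ext; dsimp only; simp only [Prod.mk.injEq, and_true]
    omega
  right_inv p := by
    obtain ⟨⟨a,b,w⟩, h4, hab, hw⟩ := p
    dsimp only at h4 hab hw
    apply Subtype.ext; dsimp only; simp only [Prod.mk.injEq, and_true]
    omega

def eqv5 (m : ℤ) :
    {p : ℤ×ℤ×ℤ // (PM m p ∧ p.1 % 2 = 1) ∧ (p.1 - p.2.2) % 4 = 0} ≃ {p : ℤ×ℤ×ℤ // Sx' m p} where
  toFun p := ⟨((p.1.1+3*p.1.2.2)/4, p.1.2.1/2, (p.1.1-p.1.2.2)/4), by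
    obtain ⟨⟨a,b,w⟩, ⟨⟨h4, hab, hw⟩, ha⟩, hd⟩ := p
    dsimp only at h4 hab hw ha hd ⊢
    have h1 : 4*((a+3*w)/4) = a+3*w := by omega
    have h3 : 4*((a-w)/4) = a-w := by omega
    have h2 : 2*(b/2) = b := by omega
    have hq := quadQuarter h1 h3
    have hb : b^2 = 4*(b/2)^2 := by linear_combination (b+2*(b/2))*h2.symm
    refine ⟨?_, ?_⟩ <;> dsimp only
    · linarith
    · omega⟩
  invFun p := ⟨(p.1.1+3*p.1.2.2, 2*p.1.2.1, p.1.1-p.1.2.2), by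
    obtain ⟨⟨x,y,z⟩, hS, hxz⟩ := p
    dsimp only at hS hxz ⊢
    refine ⟨⟨⟨?_, ?_, ?_⟩, ?_⟩, ?_⟩ <;> dsimp -failIfUnchanged only
    · linear_combination 4*hS
    · omega
    · omega
    · omega
    · omega⟩
  left_inv p := by
    obtain ⟨⟨a,b,w⟩, ⟨⟨h4, hab, hw⟩, ha⟩, hd⟩ := p
    dsimp only at h4 hab hw ha hd
    apply Subtype.ext; dsimp only; simp only [Prod.mk.injEq, and_true]
    omega
  right_inv p := by
    obtain ⟨⟨x,y,z⟩, hS, hxz⟩ := p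
    dsimp only at hS hxz
    apply Subtype.ext; dsimp only; simp only [Prod.mk.injEq, and_true]
    omega

def eqv6 (m : ℤ) :
    {p : ℤ×ℤ×ℤ // (PM m p ∧ p.1 % 2 = 1) ∧ ¬(p.1 - p.2.2) % 4 = 0} ≃ {p : ℤ×ℤ×ℤ // Sx' m p} where
  toFun p := ⟨((-p.1.1+3*p.1.2.2)/4, p.1.2.1/2, (-p.1.1-p.1.2.2)/4), by
    obtain ⟨⟨a,b,w⟩, ⟨⟨h4, hab, hw⟩, ha⟩, hd⟩ := p
    dsimp only at h4 hab hw ha hd ⊢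
    have h1 : 4*((-a+3*w)/4) = -a+3*w := by omega
    have h3 : 4*((-a-w)/4) = -a-w := by omega
    have h2 : 2*(b/2) = b := by omega
    have hq := quadQuarter h1 h3
    have hb : b^2 = 4*(b/2)^2 := by linear_combination (b+2*(b/2))*h2.symm
    have hn : (-a)^2 = a^2 := by ring
    refine ⟨?_, ?_⟩ <;> dsimp only
    · linarith
    · omega⟩
  invFun p := ⟨(-(p.1.1+3*p.1.2.2), 2*p.1.2.1, p.1.1-p.1.2.2), by
    obtain ⟨⟨x,y,z⟩, hS, hxz⟩ := p
    dsimp only at hS hxz ⊢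
    refine ⟨⟨⟨?_, ?_, ?_⟩, ?_⟩, ?_⟩ <;> dsimp -failIfUnchanged only
    · linear_combination 4*hS
    · omega
    · omega
    · omega
    · omega⟩
  left_inv p := by
    obtain ⟨⟨a,b,w⟩, ⟨⟨h4, hab, hw⟩, ha⟩, hd⟩ := p
    dsimp only at h4 hab hw ha hd
    apply Subtype.ext; dsimp only; simp only [Prod.mk.injEq, and_true]
    omega
  right_inv p := by
    obtain ⟨⟨x,y,z⟩, hS, hxz⟩ := p
    dsimp only at hS hxz
    apply Subtype.ext; dsimp only; simp only [Prod.mk.injEq, and_true]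
    omega

def eqv8 (m : ℤ) :
    {p : ℤ×ℤ×ℤ // (PM m p ∧ ¬p.1 % 2 = 1) ∧ (p.2.1 - p.2.2) % 4 = 0} ≃ {p : ℤ×ℤ×ℤ // Sy' m p} where
  toFun p := ⟨(p.1.1/2, (p.1.2.1+3*p.1.2.2)/4, (p.1.2.1-p.1.2.2)/4), by
    obtain ⟨⟨a,b,w⟩, ⟨⟨h4, hab, hw⟩, ha⟩, hd⟩ := p
    dsimp only at h4 hab hw ha hd ⊢
    have h1 : 4*((b+3*w)/4) = b+3*w := by omega
    have h3 : 4*((b-w)/4) = b-w := by omega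
    have h2 : 2*(a/2) = a := by omega
    have hq := quadQuarter h1 h3
    have hb : a^2 = 4*(a/2)^2 := by linear_combination (a+2*(a/2))*h2.symm
    refine ⟨?_, ?_⟩ <;> dsimp only
    · linarith
    · omega⟩
  invFun p := ⟨(2*p.1.1, p.1.2.1+3*p.1.2.2, p.1.2.1-p.1.2.2), by
    obtain ⟨⟨x,y,z⟩, hS, hyz⟩ := p
    dsimp only at hS hyz ⊢
    refine ⟨⟨⟨?_, ?_, ?_⟩, ?_⟩, ?_⟩ <;> dsimp -failIfUnchanged only
    · linear_combination 4*hS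
    · omega
    · omega
    · omega
    · omega⟩
  left_inv p := by
    obtain ⟨⟨a,b,w⟩, ⟨⟨h4, hab, hw⟩, ha⟩, hd⟩ := p
    dsimp only at h4 hab hw ha hd
    apply Subtype.ext; dsimp only; simp only [Prod.mk.injEq, and_true]
    omega
  right_inv p := by
    obtain ⟨⟨x,y,z⟩, hS, hyz⟩ := p
    dsimp only at hS hyz
    apply Subtype.ext; dsimp only; simp only [Prod.mk.injEq, and_true]
    omega

def eqv9 (m : ℤ) :
    {p : ℤ×ℤ×ℤ // (PM m p ∧ ¬p.1 % 2 = 1) ∧ ¬(p.2.1 - p.2.2) % 4 = 0} ≃ {p : ℤ×ℤ×ℤ // Sy' m p} where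
  toFun p := ⟨(p.1.1/2, (-p.1.2.1+3*p.1.2.2)/4, (-p.1.2.1-p.1.2.2)/4), by
    obtain ⟨⟨a,b,w⟩, ⟨⟨h4, hab, hw⟩, ha⟩, hd⟩ := p
    dsimp only at h4 hab hw ha hd ⊢
    have h1 : 4*((-b+3*w)/4) = -b+3*w := by omega
    have h3 : 4*((-b-w)/4) = -b-w := by omega
    have h2 : 2*(a/2) = a := by omega
    have hq := quadQuarter h1 h3
    have hb : a^2 = 4*(a/2)^2 := by linear_combination (a+2*(a/2))*h2.symm
    have hn : (-b)^2 = b^2 := by ring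
    refine ⟨?_, ?_⟩ <;> dsimp only
    · linarith
    · omega⟩
  invFun p := ⟨(2*p.1.1, -(p.1.2.1+3*p.1.2.2), p.1.2.1-p.1.2.2), by
    obtain ⟨⟨x,y,z⟩, hS, hyz⟩ := p
    dsimp only at hS hyz ⊢
    refine ⟨⟨⟨?_, ?_, ?_⟩, ?_⟩, ?_⟩ <;> dsimp -failIfUnchanged only
    · linear_combination 4*hS
    · omega
    · omega
    · omega
    · omega⟩
  left_inv p := by
    obtain ⟨⟨a,b,w⟩, ⟨⟨h4, hab, hw⟩, ha⟩, hd⟩ := p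
    dsimp only at h4 hab hw ha hd
    apply Subtype.ext; dsimp only; simp only [Prod.mk.injEq, and_true]
    omega
  right_inv p := by
    obtain ⟨⟨x,y,z⟩, hS, hyz⟩ := p
    dsimp only at hS hyz
    apply Subtype.ext; dsimp only; simp only [Prod.mk.injEq, and_true]
    omega

def eqvM (m : ℤ) : {p : ℤ×ℤ×ℤ // PM m p} ≃
    ({p : ℤ×ℤ×ℤ // Sx' m p} ⊕ {p : ℤ×ℤ×ℤ // Sx' m p}) ⊕
    ({p : ℤ×ℤ×ℤ // Sy' m p} ⊕ {p : ℤ×ℤ×ℤ // Sy' m p}) :=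
  (splitEquiv (PM m) (fun p => p.1 % 2 = 1)).trans
    (Equiv.sumCongr
      ((splitEquiv _ (fun p => (p.1 - p.2.2) % 4 = 0)).trans (Equiv.sumCongr (eqv5 m) (eqv6 m)))
      ((splitEquiv _ (fun p => (p.2.1 - p.2.2) % 4 = 0)).trans (Equiv.sumCongr (eqv8 m) (eqv9 m))))

def psi1 (m : ℤ) (hm : m % 8 = 5) :
    {p : ℤ×ℤ×ℤ // (((m = p.1^2+p.2.1^2+3*p.2.2^2) ∧ p.2.2 % 2 = 1) ∧ 0 < p.2.2) ∧ (p.2.1-p.2.2) % 4 = 0}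
    ≃ {p : ℤ×ℤ×ℤ // (((m = p.1^2+p.2.1^2+3*p.2.2^2) ∧ ¬p.2.2 % 2 = 1) ∧ p.1 % 2 = 1) ∧ p.2.2 < p.2.1} where
  toFun p := ⟨(p.1.1, (p.1.2.1+3*p.1.2.2)/2, (p.1.2.1-p.1.2.2)/2), by
    obtain ⟨⟨x,y,z⟩, ⟨⟨hS, hz⟩, hpos⟩, hd⟩ := p
    dsimp only at hS hz hpos hd ⊢
    have hall := mod8_5 hS hm
    have hy : y % 2 = 1 := by rcases hall with h|h|h <;> omega
    have hx : x % 2 = 1 := by rcases hall with h|h|h <;> omega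
    have h1 : 2*((y+3*z)/2) = y+3*z := by omega
    have h2 : 2*((y-z)/2) = y-z := by omega
    have hq := quadPair h1 h2
    refine ⟨⟨⟨?_, ?_⟩, ?_⟩, ?_⟩ <;> dsimp -failIfUnchanged only
    · linarith
    · omega
    · omega
    · omega⟩
  invFun p := ⟨(p.1.1, (p.1.2.1+3*p.1.2.2)/2, (p.1.2.1-p.1.2.2)/2), by
    obtain ⟨⟨x,Y,Z⟩, ⟨⟨hS, hz⟩, hx⟩, hlt⟩ := p
    dsimp only at hS hz hx hlt ⊢
    have hall := mod8_5 hS hm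
    have hYZ : (Y - Z) % 4 = 2 := by rcases hall with h|h|h <;> omega
    have h1 : 2*((Y+3*Z)/2) = Y+3*Z := by omega
    have h2 : 2*((Y-Z)/2) = Y-Z := by omega
    have hq := quadPair h1 h2
    refine ⟨⟨⟨?_, ?_⟩, ?_⟩, ?_⟩ <;> dsimp -failIfUnchanged only
    · linarith
    · omega
    · omega
    · omega⟩
  left_inv p := by
    obtain ⟨⟨x,y,z⟩, ⟨⟨hS, hz⟩, hpos⟩, hd⟩ := p
    dsimp only at hS hz hpos hd
    have hall := mod8_5 hS hm
    have hy : y % 2 = 1 := by rcases hall with h|h|h <;> omega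
    apply Subtype.ext; dsimp only; simp only [Prod.mk.injEq, true_and]
    omega
  right_inv p := by
    obtain ⟨⟨x,Y,Z⟩, ⟨⟨hS, hz⟩, hx⟩, hlt⟩ := p
    dsimp only at hS hz hx hlt
    have hall := mod8_5 hS hm
    have hYZ : (Y - Z) % 4 = 2 := by rcases hall with h|h|h <;> omega
    apply Subtype.ext; dsimp only; simp only [Prod.mk.injEq, true_and]
    omega

def psi2 (m : ℤ) (hm : m % 8 = 5) :
    {p : ℤ×ℤ×ℤ // (((m = p.1^2+p.2.1^2+3*p.2.2^2) ∧ p.2.2 % 2 = 1) ∧ 0 < p.2.2) ∧ ¬(p.2.1-p.2.2) % 4 = 0}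
    ≃ {p : ℤ×ℤ×ℤ // (((m = p.1^2+p.2.1^2+3*p.2.2^2) ∧ ¬p.2.2 % 2 = 1) ∧ p.1 % 2 = 1) ∧ ¬p.2.2 < p.2.1} where
  toFun p := ⟨(p.1.1, (p.1.2.1-3*p.1.2.2)/2, (p.1.2.1+p.1.2.2)/2), by
    obtain ⟨⟨x,y,z⟩, ⟨⟨hS, hz⟩, hpos⟩, hd⟩ := p
    dsimp only at hS hz hpos hd ⊢
    have hall := mod8_5 hS hm
    have hy : y % 2 = 1 := by rcases hall with h|h|h <;> omega
    have hx : x % 2 = 1 := by rcases hall with h|h|h <;> omega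
    have h1 : 2*((y-3*z)/2) = y-3*z := by omega
    have h2 : 2*((y+z)/2) = y+z := by omega
    have hq := quadPair' h1 h2
    refine ⟨⟨⟨?_, ?_⟩, ?_⟩, ?_⟩ <;> dsimp -failIfUnchanged only
    · linarith
    · omega
    · omega
    · omega⟩
  invFun p := ⟨(p.1.1, (p.1.2.1+3*p.1.2.2)/2, (p.1.2.2-p.1.2.1)/2), by
    obtain ⟨⟨x,Y,Z⟩, ⟨⟨hS, hz⟩, hx⟩, hlt⟩ := p
    dsimp only at hS hz hx hlt ⊢
    have hall := mod8_5 hS hm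
    have hYZ : (Y - Z) % 4 = 2 := by rcases hall with h|h|h <;> omega
    have h1 : 2*((Y+3*Z)/2) = Y+3*Z := by omega
    have h2 : 2*((Z-Y)/2) = Z-Y := by omega
    have hq := quadPair'' h1 h2
    refine ⟨⟨⟨?_, ?_⟩, ?_⟩, ?_⟩ <;> dsimp -failIfUnchanged only
    · linarith
    · omega
    · omega
    · omega⟩
  left_inv p := by
    obtain ⟨⟨x,y,z⟩, ⟨⟨hS, hz⟩, hpos⟩, hd⟩ := p
    dsimp only at hS hz hpos hd
    have hall := mod8_5 hS hm
    have hy : y % 2 = 1 := by rcases hall with h|h|h <;> omega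
    apply Subtype.ext; dsimp only; simp only [Prod.mk.injEq, true_and]
    omega
  right_inv p := by
    obtain ⟨⟨x,Y,Z⟩, ⟨⟨hS, hz⟩, hx⟩, hlt⟩ := p
    dsimp only at hS hz hx hlt
    have hall := mod8_5 hS hm
    have hYZ : (Y - Z) % 4 = 2 := by rcases hall with h|h|h <;> omega
    apply Subtype.ext; dsimp only; simp only [Prod.mk.injEq, true_and]
    omega

def psi3 (m : ℤ) (hm : m % 8 = 5) :
    {p : ℤ×ℤ×ℤ // (((m = p.1^2+p.2.1^2+3*p.2.2^2) ∧ p.2.2 % 2 = 1) ∧ ¬0 < p.2.2) ∧ (p.1-p.2.2) % 4 = 0}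
    ≃ {p : ℤ×ℤ×ℤ // (((m = p.1^2+p.2.1^2+3*p.2.2^2) ∧ ¬p.2.2 % 2 = 1) ∧ ¬p.1 % 2 = 1) ∧ p.1 < p.2.2} where
  toFun p := ⟨((p.1.1+3*p.1.2.2)/2, p.1.2.1, (p.1.1-p.1.2.2)/2), by
    obtain ⟨⟨x,y,z⟩, ⟨⟨hS, hz⟩, hpos⟩, hd⟩ := p
    dsimp only at hS hz hpos hd ⊢
    have hall := mod8_5 hS hm
    have hy : y % 2 = 1 := by rcases hall with h|h|h <;> omega
    have hx : x % 2 = 1 := by rcases hall with h|h|h <;> omega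
    have h1 : 2*((x+3*z)/2) = x+3*z := by omega
    have h2 : 2*((x-z)/2) = x-z := by omega
    have hq := quadPair h1 h2
    refine ⟨⟨⟨?_, ?_⟩, ?_⟩, ?_⟩ <;> dsimp -failIfUnchanged only
    · linarith
    · omega
    · omega
    · omega⟩
  invFun p := ⟨((p.1.1+3*p.1.2.2)/2, p.1.2.1, (p.1.1-p.1.2.2)/2), by
    obtain ⟨⟨X,y,Z⟩, ⟨⟨hS, hz⟩, hx⟩, hlt⟩ := p
    dsimp only at hS hz hx hlt ⊢
    have hall := mod8_5 hS hm
    have hXZ : (X - Z) % 4 = 2 := by rcases hall with h|h|h <;> omega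
    have h1 : 2*((X+3*Z)/2) = X+3*Z := by omega
    have h2 : 2*((X-Z)/2) = X-Z := by omega
    have hq := quadPair h1 h2
    refine ⟨⟨⟨?_, ?_⟩, ?_⟩, ?_⟩ <;> dsimp -failIfUnchanged only
    · linarith
    · omega
    · omega
    · omega⟩
  left_inv p := by
    obtain ⟨⟨x,y,z⟩, ⟨⟨hS, hz⟩, hpos⟩, hd⟩ := p
    dsimp only at hS hz hpos hd
    have hall := mod8_5 hS hm
    have hx : x % 2 = 1 := by rcases hall with h|h|h <;> omega
    apply Subtype.ext; dsimp only; simp only [Prod.mk.injEq, true_and]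
    omega
  right_inv p := by
    obtain ⟨⟨X,y,Z⟩, ⟨⟨hS, hz⟩, hx⟩, hlt⟩ := p
    dsimp only at hS hz hx hlt
    have hall := mod8_5 hS hm
    have hXZ : (X - Z) % 4 = 2 := by rcases hall with h|h|h <;> omega
    apply Subtype.ext; dsimp only; simp only [Prod.mk.injEq, true_and]
    omega

def psi4 (m : ℤ) (hm : m % 8 = 5) :
    {p : ℤ×ℤ×ℤ // (((m = p.1^2+p.2.1^2+3*p.2.2^2) ∧ p.2.2 % 2 = 1) ∧ ¬0 < p.2.2) ∧ ¬(p.1-p.2.2) % 4 = 0}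
    ≃ {p : ℤ×ℤ×ℤ // (((m = p.1^2+p.2.1^2+3*p.2.2^2) ∧ ¬p.2.2 % 2 = 1) ∧ ¬p.1 % 2 = 1) ∧ ¬p.1 < p.2.2} where
  toFun p := ⟨((p.1.1-3*p.1.2.2)/2, p.1.2.1, (p.1.1+p.1.2.2)/2), by
    obtain ⟨⟨x,y,z⟩, ⟨⟨hS, hz⟩, hpos⟩, hd⟩ := p
    dsimp only at hS hz hpos hd ⊢
    have hall := mod8_5 hS hm
    have hy : y % 2 = 1 := by rcases hall with h|h|h <;> omega
    have hx : x % 2 = 1 := by rcases hall with h|h|h <;> omega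
    have h1 : 2*((x-3*z)/2) = x-3*z := by omega
    have h2 : 2*((x+z)/2) = x+z := by omega
    have hq := quadPair' h1 h2
    refine ⟨⟨⟨?_, ?_⟩, ?_⟩, ?_⟩ <;> dsimp -failIfUnchanged only
    · linarith
    · omega
    · omega
    · omega⟩
  invFun p := ⟨((p.1.1+3*p.1.2.2)/2, p.1.2.1, (p.1.2.2-p.1.1)/2), by
    obtain ⟨⟨X,y,Z⟩, ⟨⟨hS, hz⟩, hx⟩, hlt⟩ := p
    dsimp only at hS hz hx hlt ⊢
    have hall := mod8_5 hS hm
    have hXZ : (X - Z) % 4 = 2 := by rcases hall with h|h|h <;> omega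
    have h1 : 2*((X+3*Z)/2) = X+3*Z := by omega
    have h2 : 2*((Z-X)/2) = Z-X := by omega
    have hq := quadPair'' h1 h2
    refine ⟨⟨⟨?_, ?_⟩, ?_⟩, ?_⟩ <;> dsimp -failIfUnchanged only
    · linarith
    · omega
    · omega
    · omega⟩
  left_inv p := by
    obtain ⟨⟨x,y,z⟩, ⟨⟨hS, hz⟩, hpos⟩, hd⟩ := p
    dsimp only at hS hz hpos hd
    have hall := mod8_5 hS hm
    have hx : x % 2 = 1 := by rcases hall with h|h|h <;> omega
    apply Subtype.ext; dsimp only; simp only [Prod.mk.injEq, true_and]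
    omega
  right_inv p := by
    obtain ⟨⟨X,y,Z⟩, ⟨⟨hS, hz⟩, hx⟩, hlt⟩ := p
    dsimp only at hS hz hx hlt
    have hall := mod8_5 hS hm
    have hXZ : (X - Z) % 4 = 2 := by rcases hall with h|h|h <;> omega
    apply Subtype.ext; dsimp only; simp only [Prod.mk.injEq, true_and]
    omega

/-- the common reduction: `t 1 1 6 n` counts `PM (n+1)`. -/
lemma t_eq_cardPM (n : ℕ) : t 1 1 6 n = Nat.card {p : ℤ×ℤ×ℤ // PM ((n:ℤ)+1) p} := by
  unfold t
  refine Nat.card_congr ?_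
  refine (Equiv.subtypeEquivRight (q := fun p : ℤ×ℤ×ℤ => (n:ℤ) = tri p.1 + tri p.2.1 + 6*tri p.2.2)
    (fun p => by push_cast; constructor <;> intro h <;> linarith)).trans ?_
  exact (eqv1 n).trans (eqv2 ((n:ℤ)+1))

lemma N_eq_cardSN (n : ℕ) :
    N 1 1 3 (n+1) = Nat.card {p : ℤ×ℤ×ℤ // (n:ℤ)+1 = p.1^2+p.2.1^2+3*p.2.2^2} := by
  unfold N
  refine Nat.card_congr (Equiv.subtypeEquivRight (fun p => ?_))
  push_cast
  constructor <;> intro h <;> linarith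

theorem stmt11 (n : ℕ) (hn : 0 < n) :
    (n % 8 = 0 → t 1 1 6 n = 2 * N 1 1 3 (n + 1)) ∧
    (n % 8 = 4 → t 1 1 6 n = N 1 1 3 (n + 1)) := by
  constructor
  · intro hn8
    have hm : ((n:ℤ)+1) % 8 = 1 := by omega
    set m : ℤ := (n:ℤ)+1 with hmdef
    have ex : {p : ℤ×ℤ×ℤ // Sx' m p} ≃
        {p : ℤ×ℤ×ℤ // (m = p.1^2+p.2.1^2+3*p.2.2^2) ∧ p.1 % 2 = 1} := by
      refine Equiv.subtypeEquivRight (fun p => ?_)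
      unfold Sx'
      constructor
      · rintro ⟨hS, hxz⟩
        exact ⟨hS, by rcases mod8_1 hS hm with h|h <;> omega⟩
      · rintro ⟨hS, hx⟩
        exact ⟨hS, by rcases mod8_1 hS hm with h|h <;> omega⟩
    have ey : {p : ℤ×ℤ×ℤ // Sy' m p} ≃
        {p : ℤ×ℤ×ℤ // (m = p.1^2+p.2.1^2+3*p.2.2^2) ∧ ¬p.1 % 2 = 1} := by
      refine Equiv.subtypeEquivRight (fun p => ?_)
      unfold Sy'
      constructor
      · rintro ⟨hS, hyz⟩
        exact ⟨hS, by rcases mod8_1 hS hm with h|h <;> omega⟩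
      · rintro ⟨hS, hy⟩
        exact ⟨hS, by rcases mod8_1 hS hm with h|h <;> omega⟩
    have eqvS := splitEquiv (fun p : ℤ×ℤ×ℤ => m = p.1^2+p.2.1^2+3*p.2.2^2) (fun p => p.1 % 2 = 1)
    have grand : {p : ℤ×ℤ×ℤ // PM m p} ≃
        ({p : ℤ×ℤ×ℤ // m = p.1^2+p.2.1^2+3*p.2.2^2} ⊕ {p : ℤ×ℤ×ℤ // m = p.1^2+p.2.1^2+3*p.2.2^2}) :=
      (eqvM m).trans ((Equiv.sumCongr (Equiv.sumCongr ex ex) (Equiv.sumCongr ey ey)).trans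
        ((Equiv.sumSumSumComm _ _ _ _).trans (Equiv.sumCongr eqvS.symm eqvS.symm)))
    have hcard : t 1 1 6 n =
        Nat.card ({p : ℤ×ℤ×ℤ // m = p.1^2+p.2.1^2+3*p.2.2^2}
          ⊕ {p : ℤ×ℤ×ℤ // m = p.1^2+p.2.1^2+3*p.2.2^2}) := by
      rw [t_eq_cardPM n]
      exact Nat.card_congr grand
    rw [hcard, ← Nat.card_congr (Equiv.boolProdEquivSum _), Nat.card_prod, N_eq_cardSN]
    simp [Nat.card_eq_fintype_card]
    rfl
  · intro hn8
    have hm : ((n:ℤ)+1) % 8 = 5 := by omega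
    set m : ℤ := (n:ℤ)+1 with hmdef
    have ex : {p : ℤ×ℤ×ℤ // Sx' m p} ≃
        {p : ℤ×ℤ×ℤ // ((m = p.1^2+p.2.1^2+3*p.2.2^2) ∧ ¬p.2.2 % 2 = 1) ∧ p.1 % 2 = 1} := by
      refine Equiv.subtypeEquivRight (fun p => ?_)
      unfold Sx'
      constructor
      · rintro ⟨hS, hxz⟩
        exact ⟨⟨hS, by rcases mod8_5 hS hm with h|h|h <;> omega⟩,
          by rcases mod8_5 hS hm with h|h|h <;> omega⟩
      · rintro ⟨⟨hS, hz⟩, hx⟩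
        exact ⟨hS, by rcases mod8_5 hS hm with h|h|h <;> omega⟩
    have ey : {p : ℤ×ℤ×ℤ // Sy' m p} ≃
        {p : ℤ×ℤ×ℤ // ((m = p.1^2+p.2.1^2+3*p.2.2^2) ∧ ¬p.2.2 % 2 = 1) ∧ ¬p.1 % 2 = 1} := by
      refine Equiv.subtypeEquivRight (fun p => ?_)
      unfold Sy'
      constructor
      · rintro ⟨hS, hyz⟩
        exact ⟨⟨hS, by rcases mod8_5 hS hm with h|h|h <;> omega⟩,
          by rcases mod8_5 hS hm with h|h|h <;> omega⟩
      · rintro ⟨⟨hS, hz⟩, hx⟩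
        exact ⟨hS, by rcases mod8_5 hS hm with h|h|h <;> omega⟩
    have eqvALL : {p : ℤ×ℤ×ℤ // (m = p.1^2+p.2.1^2+3*p.2.2^2) ∧ p.2.2 % 2 = 1} ≃
        ({p : ℤ×ℤ×ℤ // ((m = p.1^2+p.2.1^2+3*p.2.2^2) ∧ ¬p.2.2 % 2 = 1) ∧ p.1 % 2 = 1} ⊕
         {p : ℤ×ℤ×ℤ // ((m = p.1^2+p.2.1^2+3*p.2.2^2) ∧ ¬p.2.2 % 2 = 1) ∧ ¬p.1 % 2 = 1}) :=
      (splitEquiv _ (fun p : ℤ×ℤ×ℤ => 0 < p.2.2)).trans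
       ((Equiv.sumCongr (splitEquiv _ (fun p : ℤ×ℤ×ℤ => (p.2.1-p.2.2) % 4 = 0))
                        (splitEquiv _ (fun p : ℤ×ℤ×ℤ => (p.1-p.2.2) % 4 = 0))).trans
        ((Equiv.sumCongr (Equiv.sumCongr (psi1 m hm) (psi2 m hm))
                         (Equiv.sumCongr (psi3 m hm) (psi4 m hm))).trans
         (Equiv.sumCongr (splitEquiv _ (fun p : ℤ×ℤ×ℤ => p.2.2 < p.2.1)).symm
                         (splitEquiv _ (fun p : ℤ×ℤ×ℤ => p.1 < p.2.2)).symm)))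
    have eqvS : {p : ℤ×ℤ×ℤ // m = p.1^2+p.2.1^2+3*p.2.2^2} ≃
        (({p : ℤ×ℤ×ℤ // ((m = p.1^2+p.2.1^2+3*p.2.2^2) ∧ ¬p.2.2 % 2 = 1) ∧ p.1 % 2 = 1} ⊕
          {p : ℤ×ℤ×ℤ // ((m = p.1^2+p.2.1^2+3*p.2.2^2) ∧ ¬p.2.2 % 2 = 1) ∧ ¬p.1 % 2 = 1}) ⊕
         ({p : ℤ×ℤ×ℤ // ((m = p.1^2+p.2.1^2+3*p.2.2^2) ∧ ¬p.2.2 % 2 = 1) ∧ p.1 % 2 = 1} ⊕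
          {p : ℤ×ℤ×ℤ // ((m = p.1^2+p.2.1^2+3*p.2.2^2) ∧ ¬p.2.2 % 2 = 1) ∧ ¬p.1 % 2 = 1})) :=
      (splitEquiv _ (fun p => p.2.2 % 2 = 1)).trans
        (Equiv.sumCongr eqvALL (splitEquiv _ (fun p : ℤ×ℤ×ℤ => p.1 % 2 = 1)))
    have grand : {p : ℤ×ℤ×ℤ // PM m p} ≃ {p : ℤ×ℤ×ℤ // m = p.1^2+p.2.1^2+3*p.2.2^2} :=
      (eqvM m).trans ((Equiv.sumCongr (Equiv.sumCongr ex ex) (Equiv.sumCongr ey ey)).trans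
        ((Equiv.sumSumSumComm _ _ _ _).symm.trans eqvS.symm))
    rw [t_eq_cardPM n, N_eq_cardSN]
    exact Nat.card_congr grand
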